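/- arXiv:2203.13117 — 3 statements merged into one kernel-verified Lean document; each statement's English description precedes it below -/
import Mathlib

section
/- Define the distance D(f,g;x) = (∑_{p ≤ x} (1 − Re(f(p)·conj(g(p))))/p)^{1/2} for multiplicative functions f, g taking values in the closed unit disc. Then D satisfies the triangle inequality: for any unit-disc-valued multiplicative functions f, f', g, g', D(ff', gg'; x) ≤ D(f,g;x) + D(f',g';x). -/
open Finset Complex

/-- The pretentious distance `D(f,g;x)` between unit-disc-valued multiplicative functions. -/
noncomputable def pretentiousDist (f g : ℕ → ℂ) (x : ℝ) : ℝ :=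
  Real.sqrt (∑ p ∈ Finset.filter Nat.Prime (Finset.range (⌊x⌋₊ + 1)),
    (1 - (f p * (starRingEnd ℂ) (g p)).re) / p)

lemma norm_sq_decomp (z : ℂ) : ‖z‖ ^ 2 = z.re ^ 2 + z.im ^ 2 := by
  rw [Complex.sq_norm, Complex.normSq_apply]; ring

/-- Key pointwise inequality: for `a, b` in the closed unit disc,
`1 - Re(ab) ≤ (√(1 - Re a) + √(1 - Re b))²`. -/
lemma key_ineq (a b : ℂ) (ha : ‖a‖ ≤ 1) (hb : ‖b‖ ≤ 1) :
    1 - (a * b).re ≤ (Real.sqrt (1 - a.re) + Real.sqrt (1 - b.re)) ^ 2 := by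
  have hra : a.re ≤ 1 := (Complex.re_le_norm a).trans ha
  have hrb : b.re ≤ 1 := (Complex.re_le_norm b).trans hb
  have h1a : (0:ℝ) ≤ 1 - a.re := by linarith
  have h1b : (0:ℝ) ≤ 1 - b.re := by linarith
  have hna : ‖1 - a‖ ≤ Real.sqrt (2 * (1 - a.re)) := by
    rw [show ‖1 - a‖ = Real.sqrt (‖1 - a‖^2) by rw [Real.sqrt_sq (norm_nonneg _)]]
    apply Real.sqrt_le_sqrt
    rw [norm_sq_decomp, Complex.sub_re, Complex.sub_im, Complex.one_re, Complex.one_im]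
    nlinarith [norm_sq_decomp a, norm_nonneg a, sq_nonneg ‖a‖]
  have hnb : ‖1 - b‖ ≤ Real.sqrt (2 * (1 - b.re)) := by
    rw [show ‖1 - b‖ = Real.sqrt (‖1 - b‖^2) by rw [Real.sqrt_sq (norm_nonneg _)]]
    apply Real.sqrt_le_sqrt
    rw [norm_sq_decomp, Complex.sub_re, Complex.sub_im, Complex.one_re, Complex.one_im]
    nlinarith [norm_sq_decomp b, norm_nonneg b, sq_nonneg ‖b‖]
  have hdecomp : 1 - (a * b).re = (1 - a.re) + (1 - b.re) - ((1 - a) * (1 - b)).re := by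
    simp [Complex.mul_re, Complex.sub_re, Complex.sub_im]
    ring
  have hre : -((1 - a) * (1 - b)).re ≤ ‖1 - a‖ * ‖1 - b‖ := by
    have h := Complex.abs_re_le_norm ((1 - a) * (1 - b))
    calc -((1 - a) * (1 - b)).re ≤ |((1 - a) * (1 - b)).re| := neg_le_abs _
      _ ≤ ‖(1 - a) * (1 - b)‖ := h
      _ = ‖1 - a‖ * ‖1 - b‖ := norm_mul _ _
  have h4 : Real.sqrt 4 = 2 := by
    rw [show (4:ℝ) = 2^2 by norm_num, Real.sqrt_sq (by norm_num)]
  have hsqrtmul : Real.sqrt (2 * (1 - a.re)) * Real.sqrt (2 * (1 - b.re)) =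
      2 * (Real.sqrt (1 - a.re) * Real.sqrt (1 - b.re)) := by
    rw [← Real.sqrt_mul (by positivity),
      show 2 * (1 - a.re) * (2 * (1 - b.re)) = 4 * ((1 - a.re) * (1 - b.re)) by ring,
      Real.sqrt_mul (by norm_num), h4, Real.sqrt_mul h1a]
  have hprod : ‖1 - a‖ * ‖1 - b‖ ≤ 2 * (Real.sqrt (1 - a.re) * Real.sqrt (1 - b.re)) := by
    rw [← hsqrtmul]
    exact mul_le_mul hna hnb (norm_nonneg _) (Real.sqrt_nonneg _)
  have hsa : Real.sqrt (1 - a.re) ^ 2 = 1 - a.re := Real.sq_sqrt h1a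
  have hsb : Real.sqrt (1 - b.re) ^ 2 = 1 - b.re := Real.sq_sqrt h1b
  nlinarith [hre, hprod]

set_option maxHeartbeats 1000000 in
/-- The triangle inequality for the pretentious distance:
`D(ff', gg'; x) ≤ D(f,g;x) + D(f',g';x)`. -/
theorem pretentiousDist_triangle (f f' g g' : ℕ → ℂ)
    (hf : ∀ m n : ℕ, Nat.Coprime m n → f (m * n) = f m * f n)
    (hf' : ∀ m n : ℕ, Nat.Coprime m n → f' (m * n) = f' m * f' n)
    (hg : ∀ m n : ℕ, Nat.Coprime m n → g (m * n) = g m * g n)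
    (hg' : ∀ m n : ℕ, Nat.Coprime m n → g' (m * n) = g' m * g' n)
    (hfb : ∀ n, ‖f n‖ ≤ 1) (hf'b : ∀ n, ‖f' n‖ ≤ 1)
    (hgb : ∀ n, ‖g n‖ ≤ 1) (hg'b : ∀ n, ‖g' n‖ ≤ 1) (x : ℝ) :
    pretentiousDist (f * f') (g * g') x ≤ pretentiousDist f g x + pretentiousDist f' g' x := by
  set S := Finset.filter Nat.Prime (Finset.range (⌊x⌋₊ + 1)) with hS
  set U : ℕ → ℝ := fun p => Real.sqrt ((1 - (f p * (starRingEnd ℂ) (g p)).re) / p) with hU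
  set V : ℕ → ℝ := fun p => Real.sqrt ((1 - (f' p * (starRingEnd ℂ) (g' p)).re) / p) with hV
  have hnorm : ∀ (u v : ℕ → ℂ), (∀ n, ‖u n‖ ≤ 1) → (∀ n, ‖v n‖ ≤ 1) →
      ∀ p : ℕ, ‖u p * (starRingEnd ℂ) (v p)‖ ≤ 1 := by
    intro u v hu hv p
    rw [norm_mul, RCLike.norm_conj]
    exact mul_le_one₀ (hu p) (norm_nonneg _) (hv p)
  have hre_nonneg : ∀ (u v : ℕ → ℂ), (∀ n, ‖u n‖ ≤ 1) → (∀ n, ‖v n‖ ≤ 1) →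
      ∀ p : ℕ, 0 ≤ 1 - (u p * (starRingEnd ℂ) (v p)).re := by
    intro u v hu hv p
    have := (Complex.re_le_norm (u p * (starRingEnd ℂ) (v p))).trans (hnorm u v hu hv p)
    linarith
  have hterm_nonneg : ∀ (u v : ℕ → ℂ), (∀ n, ‖u n‖ ≤ 1) → (∀ n, ‖v n‖ ≤ 1) →
      ∀ p : ℕ, 0 ≤ (1 - (u p * (starRingEnd ℂ) (v p)).re) / p :=
    fun u v hu hv p => div_nonneg (hre_nonneg u v hu hv p) (Nat.cast_nonneg p)
  have hU2 : ∀ p : ℕ, U p ^ 2 = (1 - (f p * (starRingEnd ℂ) (g p)).re) / p :=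
    fun p => Real.sq_sqrt (hterm_nonneg f g hfb hgb p)
  have hV2 : ∀ p : ℕ, V p ^ 2 = (1 - (f' p * (starRingEnd ℂ) (g' p)).re) / p :=
    fun p => Real.sq_sqrt (hterm_nonneg f' g' hf'b hg'b p)
  -- pointwise inequality
  have hpt : ∀ p : ℕ, (1 - ((f * f') p * (starRingEnd ℂ) ((g * g') p)).re) / p
      ≤ (U p + V p) ^ 2 := by
    intro p
    have hab : (f * f') p * (starRingEnd ℂ) ((g * g') p)
        = (f p * (starRingEnd ℂ) (g p)) * (f' p * (starRingEnd ℂ) (g' p)) := by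
      simp [Pi.mul_apply, map_mul]; ring
    rcases Nat.eq_zero_or_pos p with hp0 | hp0
    · subst hp0
      simp only [Nat.cast_zero, div_zero]
      positivity
    · have hpR : (0:ℝ) < p := Nat.cast_pos.mpr hp0
      rw [hab, div_le_iff₀ hpR]
      have hkey := key_ineq (f p * (starRingEnd ℂ) (g p)) (f' p * (starRingEnd ℂ) (g' p))
        (hnorm f g hfb hgb p) (hnorm f' g' hf'b hg'b p)
      have hUe : U p = Real.sqrt (1 - (f p * (starRingEnd ℂ) (g p)).re) / Real.sqrt p := by
        simp only [hU]
        exact Real.sqrt_div (hre_nonneg f g hfb hgb p) p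
      have hVe : V p = Real.sqrt (1 - (f' p * (starRingEnd ℂ) (g' p)).re) / Real.sqrt p := by
        simp only [hV]
        exact Real.sqrt_div (hre_nonneg f' g' hf'b hg'b p) p
      calc 1 - ((f p * (starRingEnd ℂ) (g p)) * (f' p * (starRingEnd ℂ) (g' p))).re
          ≤ (Real.sqrt (1 - (f p * (starRingEnd ℂ) (g p)).re)
            + Real.sqrt (1 - (f' p * (starRingEnd ℂ) (g' p)).re)) ^ 2 := hkey
        _ = (U p + V p) ^ 2 * p := by
            rw [hUe, hVe, ← add_div, div_pow, Real.sq_sqrt hpR.le,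
              div_mul_cancel₀ _ hpR.ne']
  -- sum it up
  have hsum : ∑ p ∈ S, (1 - ((f * f') p * (starRingEnd ℂ) ((g * g') p)).re) / p
      ≤ (Real.sqrt (∑ p ∈ S, U p ^ 2) + Real.sqrt (∑ p ∈ S, V p ^ 2)) ^ 2 := by
    calc ∑ p ∈ S, (1 - ((f * f') p * (starRingEnd ℂ) ((g * g') p)).re) / p
        ≤ ∑ p ∈ S, (U p + V p) ^ 2 := Finset.sum_le_sum fun p _ => hpt p
      _ = ∑ p ∈ S, U p ^ 2 + 2 * ∑ p ∈ S, U p * V p + ∑ p ∈ S, V p ^ 2 := by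
          simp_rw [add_sq]
          rw [Finset.sum_add_distrib, Finset.sum_add_distrib]
          simp_rw [mul_assoc, ← Finset.mul_sum]
      _ ≤ ∑ p ∈ S, U p ^ 2 + 2 * (Real.sqrt (∑ p ∈ S, U p ^ 2) * Real.sqrt (∑ p ∈ S, V p ^ 2))
            + ∑ p ∈ S, V p ^ 2 := by
          gcongr
          have hcs := Finset.sum_mul_sq_le_sq_mul_sq S U V
          have h1 : (0:ℝ) ≤ ∑ p ∈ S, U p ^ 2 := Finset.sum_nonneg fun p _ => sq_nonneg _
          calc ∑ p ∈ S, U p * V p ≤ Real.sqrt ((∑ p ∈ S, U p * V p)^2) := by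
                rw [Real.sqrt_sq_eq_abs]; exact le_abs_self _
            _ ≤ Real.sqrt ((∑ p ∈ S, U p ^ 2) * ∑ p ∈ S, V p ^ 2) := Real.sqrt_le_sqrt hcs
            _ = Real.sqrt (∑ p ∈ S, U p ^ 2) * Real.sqrt (∑ p ∈ S, V p ^ 2) :=
                Real.sqrt_mul h1 _
      _ = (Real.sqrt (∑ p ∈ S, U p ^ 2) + Real.sqrt (∑ p ∈ S, V p ^ 2)) ^ 2 := by
          rw [add_sq, Real.sq_sqrt (Finset.sum_nonneg fun p _ => sq_nonneg _),
            Real.sq_sqrt (Finset.sum_nonneg fun p _ => sq_nonneg _)]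
          ring
  have hDfg : pretentiousDist f g x = Real.sqrt (∑ p ∈ S, U p ^ 2) := by
    unfold pretentiousDist
    rw [← hS]
    congr 1
    exact (Finset.sum_congr rfl fun p _ => (hU2 p).symm)
  have hDfg' : pretentiousDist f' g' x = Real.sqrt (∑ p ∈ S, V p ^ 2) := by
    unfold pretentiousDist
    rw [← hS]
    congr 1
    exact (Finset.sum_congr rfl fun p _ => (hV2 p).symm)
  rw [hDfg, hDfg']
  unfold pretentiousDist
  rw [← hS]
  have hAB : (0:ℝ) ≤ Real.sqrt (∑ p ∈ S, U p ^ 2) + Real.sqrt (∑ p ∈ S, V p ^ 2) :=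
    add_nonneg (Real.sqrt_nonneg _) (Real.sqrt_nonneg _)
  have hfinal := Real.sqrt_le_sqrt hsum
  rwa [Real.sqrt_sq hAB] at hfinal
end

section
/- Let k ≥ 2 be an integer that is not a power of 10, let ℓ be a nonzero integer, and let α be any real number. Then the sum ∑_{p ≤ x} (1 − Re(e^{2πiℓ log₁₀ k} · p^{−iα}))/p over primes p tends to infinity as x → ∞. -/
open Finset Complex Filter Topology
set_option maxHeartbeats 1000000

noncomputable def pterm (σ : ℝ) (n : ℕ) : ℝ := if n.Prime then (n : ℝ) ^ (-σ) else 0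

noncomputable def zterm (s : ℂ) (n : ℕ) : ℂ := if n.Prime then (n : ℂ) ^ (-s) else 0

noncomputable def LL (σ : ℝ) : ℝ := ∑' n, pterm σ n

noncomputable def ZZ (t σ : ℝ) : ℂ := ∑' n, zterm ((σ : ℂ) + (t : ℂ) * Complex.I) n

lemma pterm_nonneg (σ : ℝ) (n : ℕ) : 0 ≤ pterm σ n := by
  unfold pterm; split
  · positivity
  · exact le_refl 0

lemma pterm_le (σ : ℝ) (n : ℕ) : pterm σ n ≤ (n : ℝ) ^ (-σ) := by
  unfold pterm; split
  · exact le_refl _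
  · positivity

lemma summable_pterm {σ : ℝ} (hσ : 1 < σ) : Summable (pterm σ) :=
  Summable.of_nonneg_of_le (pterm_nonneg σ) (pterm_le σ)
    (Real.summable_nat_rpow.mpr (by linarith))

lemma norm_zterm (s : ℂ) (n : ℕ) : ‖zterm s n‖ = pterm s.re n := by
  unfold zterm pterm; split
  · next hn => rw [Complex.norm_natCast_cpow_of_pos hn.pos]; simp
  · simp

lemma summable_norm_zterm {s : ℂ} (hs : 1 < s.re) : Summable (fun n => ‖zterm s n‖) := by
  simpa only [norm_zterm] using summable_pterm hs

lemma summable_zterm {s : ℂ} (hs : 1 < s.re) : Summable (zterm s) :=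
  (summable_norm_zterm hs).of_norm

lemma tsum_primes_eq (g : ℕ → ℂ) :
    ∑' p : Nat.Primes, g ↑p = ∑' n : ℕ, if n.Prime then g n else 0 := by
  rw [show (∑' p : Nat.Primes, g ↑p) = ∑' p : {n : ℕ | n.Prime}, g ↑p from rfl,
    _root_.tsum_subtype]
  exact tsum_congr fun n => Set.indicator_apply _ _ _

lemma s_re (t σ : ℝ) : ((σ : ℂ) + (t : ℂ) * Complex.I).re = σ := by simp

lemma exp_WW (t σ : ℝ) (hσ : 1 < σ) :
    Complex.exp (∑' n : ℕ, -Complex.log (1 - zterm ((σ:ℂ) + (t:ℂ)*Complex.I) n))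
      = riemannZeta ((σ:ℂ) + (t:ℂ)*Complex.I) := by
  have h := riemannZeta_eulerProduct_exp_log (s := (σ:ℂ) + (t:ℂ)*Complex.I)
    (by rw [s_re]; exact hσ)
  rw [← h]; congr 1
  rw [tsum_primes_eq (fun n => -Complex.log (1 - (n:ℂ)^(-((σ:ℂ) + (t:ℂ)*Complex.I))))]
  refine tsum_congr fun n => ?_
  unfold zterm; split <;> simp

noncomputable def KK : ℝ := ∑' n : ℕ, 1/(n:ℝ)^2

lemma summable_invsq : Summable (fun n : ℕ => 1/(n:ℝ)^2) :=
  Real.summable_one_div_nat_pow.mpr one_lt_two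

lemma norm_log_term_le {s : ℂ} (hs : 1 < s.re) (n : ℕ) :
    ‖-Complex.log (1 - zterm s n) - zterm s n‖ ≤ 1/(n:ℝ)^2 := by
  unfold zterm; split
  case isFalse => simp
  case isTrue hn =>
  set z := (n:ℂ)^(-s) with hz
  have hnorm : ‖z‖ = (n:ℝ) ^ (-s.re) := by
    rw [hz, Complex.norm_natCast_cpow_of_pos hn.pos]; simp
  have hn2 : (2:ℝ) ≤ (n:ℝ) := by exact_mod_cast hn.two_le
  have hle : ‖z‖ ≤ ((n:ℝ))⁻¹ := by
    rw [hnorm, ← Real.rpow_neg_one (n:ℝ)]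
    exact Real.rpow_le_rpow_of_exponent_le (by linarith) (by linarith)
  have hhalf : ‖z‖ ≤ 1/2 := le_trans hle (by
    rw [one_div]; exact inv_anti₀ (by norm_num) hn2)
  have hlt : ‖z‖ < 1 := lt_of_le_of_lt hhalf (by norm_num)
  have key := Complex.norm_log_one_sub_inv_sub_self_le hlt
  have hli : Complex.log (1 - z)⁻¹ = -Complex.log (1 - z) :=
    Complex.log_inv _ (Complex.slitPlane_arg_ne_pi (Complex.mem_slitPlane_of_norm_lt_one
      ((norm_neg z).symm ▸ hlt)))
  rw [hli] at key
  have h2 : (1 - ‖z‖)⁻¹ ≤ 2 := by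
    rw [inv_le_iff_one_le_mul₀ (by linarith)]; linarith
  calc ‖-Complex.log (1 - z) - z‖ ≤ ‖z‖^2 * (1-‖z‖)⁻¹ / 2 := key
    _ ≤ ‖z‖^2 * 2 / 2 := by gcongr
    _ = ‖z‖^2 := by ring
    _ ≤ (((n:ℝ))⁻¹)^2 := by gcongr
    _ = 1/(n:ℝ)^2 := by rw [one_div, ← inv_pow]

lemma summable_logterm {s : ℂ} (hs : 1 < s.re) :
    Summable (fun n => -Complex.log (1 - zterm s n)) :=
  ((summable_zterm hs).clog_one_sub).neg

lemma WW_sub_ZZ (t σ : ℝ) (hσ : 1 < σ) :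
    ‖(∑' n : ℕ, -Complex.log (1 - zterm ((σ:ℂ) + (t:ℂ)*Complex.I) n)) - ZZ t σ‖ ≤ KK := by
  set s := (σ:ℂ) + (t:ℂ)*Complex.I with hs
  have hsre : 1 < s.re := by rw [hs, s_re]; exact hσ
  have hsub : Summable (fun n => -Complex.log (1 - zterm s n) - zterm s n) :=
    (summable_logterm hsre).sub (summable_zterm hsre)
  rw [ZZ, ← Summable.tsum_sub (summable_logterm hsre) (summable_zterm hsre)]
  calc ‖∑' n, (-Complex.log (1 - zterm s n) - zterm s n)‖
      ≤ ∑' n, ‖-Complex.log (1 - zterm s n) - zterm s n‖ :=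
        norm_tsum_le_tsum_norm (hsub.norm)
    _ ≤ ∑' n : ℕ, 1/(n:ℝ)^2 :=
        Summable.tsum_le_tsum (norm_log_term_le hsre) hsub.norm summable_invsq
    _ = KK := rfl

lemma ZZre_log (t σ : ℝ) (hσ : 1 < σ) :
    |(ZZ t σ).re - Real.log ‖riemannZeta ((σ:ℂ) + (t:ℂ)*Complex.I)‖| ≤ KK := by
  set W := ∑' n : ℕ, -Complex.log (1 - zterm ((σ:ℂ) + (t:ℂ)*Complex.I) n) with hW
  have hexp := exp_WW t σ hσ
  have hWre : W.re = Real.log ‖riemannZeta ((σ:ℂ) + (t:ℂ)*Complex.I)‖ := by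
    rw [← hexp, Complex.norm_exp, Real.log_exp]
  rw [← hWre]
  calc |(ZZ t σ).re - W.re| = |(ZZ t σ - W).re| := by rw [Complex.sub_re]
    _ ≤ ‖ZZ t σ - W‖ := Complex.abs_re_le_norm _
    _ = ‖W - ZZ t σ‖ := by rw [norm_sub_rev]
    _ ≤ KK := WW_sub_ZZ t σ hσ

lemma norm_ZZ_le (t σ : ℝ) (hσ : 1 < σ) : ‖ZZ t σ‖ ≤ LL σ := by
  have hsre : 1 < ((σ:ℂ) + (t:ℂ)*Complex.I).re := by rw [s_re]; exact hσ
  calc ‖ZZ t σ‖ ≤ ∑' n, ‖zterm ((σ:ℂ) + (t:ℂ)*Complex.I) n‖ :=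
        norm_tsum_le_tsum_norm (summable_norm_zterm hsre)
    _ = ∑' n, pterm σ n := by
        refine tsum_congr fun n => ?_
        rw [norm_zterm, s_re]
    _ = LL σ := rfl

lemma LL_ge_finsum {σ : ℝ} (hσ : 1 < σ) (N : ℕ) : ∑ i ∈ Finset.range N, pterm σ i ≤ LL σ :=
  Summable.sum_le_tsum (Finset.range N) (fun i _ => pterm_nonneg σ i) (summable_pterm hσ)

lemma continuous_pterm (n : ℕ) : Continuous (fun σ : ℝ => pterm σ n) := by
  unfold pterm
  split
  case isTrue hn =>
    have hpos : (0:ℝ) < (n:ℝ) := by exact_mod_cast hn.pos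
    have : (fun σ : ℝ => (n:ℝ) ^ (-σ)) = fun σ => Real.exp (Real.log n * (-σ)) := by
      funext σ; rw [Real.rpow_def_of_pos hpos]
    rw [this]
    exact Real.continuous_exp.comp (continuous_const.mul continuous_neg)
  case isFalse => exact continuous_const

lemma LL_tendsto : Tendsto LL (𝓝[>] (1:ℝ)) atTop := by
  rw [tendsto_atTop]
  intro C
  have hpe : pterm 1 = Set.indicator {p : ℕ | p.Prime} (fun n : ℕ => 1/(n:ℝ)) := by
    funext n
    simp only [Set.indicator_apply, Set.mem_setOf_eq, pterm, Real.rpow_neg_one, one_div]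
  have hns : ¬ Summable (pterm 1) := by
    rw [hpe]; exact not_summable_one_div_on_primes
  have htend : Tendsto (fun N => ∑ i ∈ Finset.range N, pterm 1 i) atTop atTop :=
    (not_summable_iff_tendsto_nat_atTop_of_nonneg (pterm_nonneg 1)).mp hns
  obtain ⟨N, hN⟩ := (htend.eventually (eventually_ge_atTop (C + 1))).exists
  have hcont : Tendsto (fun σ : ℝ => ∑ i ∈ Finset.range N, pterm σ i) (𝓝 1)
      (𝓝 (∑ i ∈ Finset.range N, pterm 1 i)) := by
    exact (tendsto_finset_sum _ fun i _ => (continuous_pterm i).continuousAt)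
  have hev : ∀ᶠ σ in 𝓝 (1:ℝ), C < ∑ i ∈ Finset.range N, pterm σ i :=
    hcont.eventually (eventually_gt_nhds (by linarith))
  filter_upwards [eventually_nhdsWithin_of_eventually_nhds hev, self_mem_nhdsWithin]
    with σ h1 h2
  exact le_trans (le_of_lt h1) (LL_ge_finsum h2 N)

lemma ZZ_re_bounded {t : ℝ} (ht : t ≠ 0) :
    ∃ M, ∀ᶠ σ in 𝓝[>] (1:ℝ), |(ZZ t σ).re| ≤ M := by
  have hne : ((1:ℝ):ℂ) + (t:ℂ)*Complex.I ≠ 1 := by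
    intro h
    have := congrArg Complex.im h
    simp at this
    exact ht this
  have hζ : riemannZeta (((1:ℝ):ℂ) + (t:ℂ)*Complex.I) ≠ 0 :=
    riemannZeta_ne_zero_of_one_le_re (by rw [s_re])
  set q : ℝ → ℝ := fun σ => Real.log ‖riemannZeta ((σ:ℂ) + (t:ℂ)*Complex.I)‖
    with hqdef
  have hmap : ContinuousAt (fun σ : ℝ => (σ:ℂ) + (t:ℂ)*Complex.I) 1 :=
    (Complex.continuous_ofReal.add continuous_const).continuousAt
  have h1 : ContinuousAt (fun σ : ℝ => riemannZeta ((σ:ℂ) + (t:ℂ)*Complex.I)) 1 :=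
    ContinuousAt.comp (g := riemannZeta) ((differentiableAt_riemannZeta hne).continuousAt) hmap
  have h2 : ContinuousAt q 1 :=
    ContinuousAt.comp (g := Real.log) (Real.continuousAt_log (norm_ne_zero_iff.mpr hζ))
      (ContinuousAt.comp (g := fun z : ℂ => ‖z‖) continuous_norm.continuousAt h1)
  refine ⟨|q 1| + 1 + KK, ?_⟩
  have hev1 : ∀ᶠ σ in 𝓝 (1:ℝ), |q σ - q 1| < 1 :=
    h2.eventually (eventually_abs_sub_lt (q 1) one_pos)
  filter_upwards [eventually_nhdsWithin_of_eventually_nhds hev1, self_mem_nhdsWithin]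
    with σ hq1 hσ
  have hb := ZZre_log t σ hσ
  have e1 : |(ZZ t σ).re| - |q σ| ≤ |(ZZ t σ).re - q σ| := abs_sub_abs_le_abs_sub _ _
  have e2 : |q σ| - |q 1| ≤ |q σ - q 1| := abs_sub_abs_le_abs_sub _ _
  linarith

lemma normSq_one_of_norm_one {c : ℂ} (hc : ‖c‖ = 1) : c.re^2 + c.im^2 = 1 := by
  have : ‖c‖ ^ 2 = 1 := by rw [hc]; norm_num
  rw [Complex.sq_norm, Complex.normSq_apply] at this
  nlinarith [this]

lemma core_tne {c : ℂ} (hc : ‖c‖ = 1) {t : ℝ} (ht : t ≠ 0) {D : ℝ} (hD : 0 ≤ D)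
    (hyp : ∀ σ : ℝ, 1 < σ → LL σ - D ≤ (c * ZZ t σ).re) : c.re = 0 := by
  obtain ⟨M, hM⟩ := ZZ_re_bounded ht
  have hM0 : 0 ≤ M := by
    obtain ⟨σ, hσ⟩ := hM.exists
    exact le_trans (abs_nonneg _) hσ
  have hcsq := normSq_one_of_norm_one hc
  have key : ∀ ε : ℝ, 0 < ε → |c.re| ≤ ε := by
    intro ε hε
    have hL : ∀ᶠ σ in 𝓝[>] (1:ℝ),
        max (max D 1) (max (8*D/ε^2) (2*(D+M)/ε)) ≤ LL σ :=
      LL_tendsto.eventually (eventually_ge_atTop _)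
    obtain ⟨σ, hZre, hLb, hσ1⟩ := (hM.and (hL.and self_mem_nhdsWithin)).exists
    set L := LL σ with hLdef
    set Z := ZZ t σ with hZdef
    set u := c * Z with hudef
    have hσ1 : (1:ℝ) < σ := hσ1
    have hDL : D ≤ L := le_trans (le_trans (le_max_left _ _) (le_max_left _ _)) hLb
    have h1L : 1 ≤ L := le_trans (le_trans (le_max_right _ _) (le_max_left _ _)) hLb
    have h8D : 8*D ≤ ε^2 * L := by
      have := le_trans (le_trans (le_max_left _ _) (le_max_right _ _)) hLb
      rw [div_le_iff₀ (by positivity)] at this; linarith [this]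
    have h2DM : 2*(D+M) ≤ ε * L := by
      have := le_trans (le_trans (le_max_right _ _) (le_max_right _ _)) hLb
      rw [div_le_iff₀ (by positivity)] at this; linarith [this]
    have hu1 : L - D ≤ u.re := hyp σ hσ1
    have hZn : ‖Z‖ ≤ L := norm_ZZ_le t σ hσ1
    have hun : ‖u‖ ≤ L := by
      rw [hudef, norm_mul, hc, one_mul]; exact hZn
    have hu2 : u.re ≤ L := le_trans (Complex.re_le_norm u) hun
    have hsq : u.re^2 + u.im^2 ≤ L^2 := by
      have h1 : ‖u‖ ^ 2 ≤ L^2 := by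
        exact pow_le_pow_left₀ (norm_nonneg _) hun 2
      rw [Complex.sq_norm, Complex.normSq_apply] at h1
      nlinarith [h1]
    have hZre' : Z.re = c.re * u.re + c.im * u.im := by
      have hcu : (starRingEnd ℂ) c * u = Z := by
        rw [hudef, show (starRingEnd ℂ) c * (c * Z) = (c * (starRingEnd ℂ) c) * Z by ring,
          Complex.mul_conj]
        have : Complex.normSq c = 1 := by
          have := hcsq; rw [Complex.normSq_apply]; nlinarith [this]
        rw [this]; simp
      rw [← hcu, Complex.mul_re, Complex.conj_re, Complex.conj_im]; ring
    have him2 : u.im^2 ≤ 2*D*L := by nlinarith [hu1, hsq, hDL]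
    have him : |u.im| ≤ ε*L/2 := by
      have h1 : u.im^2 ≤ (ε*L/2)^2 := by
        nlinarith [him2, mul_le_mul_of_nonneg_right h8D (by linarith : (0:ℝ) ≤ L)]
      calc |u.im| = Real.sqrt (u.im^2) := (Real.sqrt_sq_eq_abs _).symm
        _ ≤ Real.sqrt ((ε*L/2)^2) := Real.sqrt_le_sqrt h1
        _ = ε*L/2 := Real.sqrt_sq (by nlinarith [mul_pos hε (lt_of_lt_of_le one_pos h1L)])
    have hcre1 : |c.re| ≤ 1 := by
      rw [abs_le]; constructor <;> nlinarith [hcsq, sq_nonneg c.im]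
    have hcim1 : |c.im| ≤ 1 := by
      rw [abs_le]; constructor <;> nlinarith [hcsq, sq_nonneg c.re]
    have hstep : |c.re * L - Z.re| ≤ D + ε*L/2 := by
      have e1 : c.re * L - Z.re = c.re*(L - u.re) - c.im*u.im := by rw [hZre']; ring
      rw [e1]
      calc |c.re*(L - u.re) - c.im*u.im| ≤ |c.re*(L - u.re)| + |c.im*u.im| := by
            simpa [sub_eq_add_neg, abs_neg] using abs_add_le (c.re*(L - u.re)) (-(c.im*u.im))
        _ = |c.re| * |L - u.re| + |c.im| * |u.im| := by rw [abs_mul, abs_mul]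
        _ ≤ 1*D + 1*(ε*L/2) := by
            apply add_le_add
            · exact mul_le_mul hcre1 (by rw [abs_le]; constructor <;> linarith)
                (abs_nonneg _) zero_le_one
            · exact mul_le_mul hcim1 him (abs_nonneg _) zero_le_one
        _ = D + ε*L/2 := by ring
    have hfin : |c.re| * L ≤ D + M + ε*L/2 := by
      calc |c.re| * L = |c.re * L| := by rw [abs_mul, _root_.abs_of_nonneg (by linarith : (0:ℝ) ≤ L)]
        _ = |(c.re * L - Z.re) + Z.re| := by ring_nf
        _ ≤ |c.re * L - Z.re| + |Z.re| := abs_add_le _ _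
        _ ≤ (D + ε*L/2) + M := add_le_add hstep hZre
        _ = D + M + ε*L/2 := by ring
    nlinarith [hfin, h2DM, h1L, abs_nonneg c.re]
  by_contra h
  have hpos : 0 < |c.re| := abs_pos.mpr h
  have := key (|c.re|/2) (by positivity)
  linarith

lemma core_t0 {c : ℂ} (hc : ‖c‖ = 1) {D : ℝ} (hD : 0 ≤ D)
    (hyp : ∀ σ : ℝ, 1 < σ → LL σ - D ≤ (c * ZZ 0 σ).re) : c.re = 1 := by
  have hZr : ∀ σ : ℝ, ZZ 0 σ = ((LL σ : ℝ) : ℂ) := by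
    intro σ
    rw [ZZ, LL, Complex.ofReal_tsum]
    refine tsum_congr fun n => ?_
    unfold zterm pterm
    split
    · rw [Complex.ofReal_cpow (Nat.cast_nonneg n)]
      push_cast
      norm_num
    · simp
  have key : ∀ ε : ℝ, 0 < ε → 1 - c.re ≤ ε := by
    intro ε hε
    have hL : ∀ᶠ σ in 𝓝[>] (1:ℝ), max 1 (D/ε) ≤ LL σ :=
      LL_tendsto.eventually (eventually_ge_atTop _)
    obtain ⟨σ, hLb, hσ1⟩ := (hL.and self_mem_nhdsWithin).exists
    have hσ1 : (1:ℝ) < σ := hσ1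
    have h1L : 1 ≤ LL σ := le_trans (le_max_left _ _) hLb
    have hDε : D ≤ ε * LL σ := by
      have := le_trans (le_max_right _ _) hLb
      rw [div_le_iff₀ hε] at this; linarith [this]
    have := hyp σ hσ1
    rw [hZr σ] at this
    have hre : (c * ((LL σ : ℝ) : ℂ)).re = c.re * LL σ := by
      simp [Complex.mul_re]
    rw [hre] at this
    nlinarith [this, hDε, h1L]
  have h1 : 1 - c.re ≤ 0 := by
    by_contra h
    push_neg at h
    have := key ((1 - c.re)/2) (by linarith)
    linarith
  have h2 : c.re ≤ 1 := by
    have := Complex.re_le_norm c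
    rw [hc] at this
    linarith
  linarith

lemma key_ineq_s5 (d : ℂ) (v : ℕ → ℂ) (f : ℕ → ℝ) (hf0 : ∀ n, 0 ≤ f n) (hsum : Summable f)
    (t σ : ℝ) (hσ : 1 < σ)
    (heq : ∀ n : ℕ, n.Prime → d * (n:ℂ)^(-((σ:ℂ)+(t:ℂ)*Complex.I)) = v n * (((n:ℝ)^(-σ) : ℝ) : ℂ))
    (hle : ∀ n, n.Prime → (1 - (v n).re) * (n:ℝ)^(-σ) ≤ 4 * f n) :
    LL σ - 4 * (∑' n, f n) ≤ (d * ZZ t σ).re := by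
  have hsre : 1 < ((σ:ℂ)+(t:ℂ)*Complex.I).re := by rw [s_re]; exact hσ
  have hsumz : Summable (fun n => d * zterm ((σ:ℂ)+(t:ℂ)*Complex.I) n) :=
    (summable_zterm hsre).mul_left d
  have hsum1 : Summable (fun n => (d * zterm ((σ:ℂ)+(t:ℂ)*Complex.I) n).re) :=
    (Complex.hasSum_re hsumz.hasSum).summable
  have hre : (d * ZZ t σ).re = ∑' n, (d * zterm ((σ:ℂ)+(t:ℂ)*Complex.I) n).re := by
    rw [ZZ, ← tsum_mul_left]
    exact Complex.re_tsum hsumz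
  have hpoint : ∀ n, pterm σ n - (d * zterm ((σ:ℂ)+(t:ℂ)*Complex.I) n).re ≤ 4 * f n := by
    intro n
    by_cases hn : n.Prime
    · simp only [pterm, zterm, if_pos hn]
      rw [heq n hn]
      have hre2 : (v n * (((n:ℝ)^(-σ) : ℝ) : ℂ)).re = (v n).re * (n:ℝ)^(-σ) := by
        simp [Complex.mul_re]
      rw [hre2]
      have := hle n hn
      nlinarith [this]
    · simp only [pterm, zterm, if_neg hn]
      simp
      linarith [hf0 n]
  have hsumL : Summable (fun n => pterm σ n - (d * zterm ((σ:ℂ)+(t:ℂ)*Complex.I) n).re) :=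
    (summable_pterm hσ).sub hsum1
  have hmain : ∑' n, (pterm σ n - (d * zterm ((σ:ℂ)+(t:ℂ)*Complex.I) n).re) ≤ ∑' n, 4 * f n :=
    Summable.tsum_le_tsum hpoint hsumL (hsum.mul_left 4)
  rw [Summable.tsum_sub (summable_pterm hσ) hsum1, tsum_mul_left] at hmain
  rw [hre]
  have : LL σ = ∑' n, pterm σ n := rfl
  linarith [hmain]

lemma pow_eq_pow_ten {k a b : ℕ} (hk : 2 ≤ k) (ha : a ≠ 0) (h : k^a = 10^b) : ∃ j, k = 10^j := by
  have hk0 : k ≠ 0 := by omega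
  have hfac : a • k.factorization = b • (10:ℕ).factorization := by
    rw [← Nat.factorization_pow, ← Nat.factorization_pow, h]
  have h10 : (10:ℕ).factorization = Finsupp.single 2 1 + Finsupp.single 5 1 := by
    rw [show (10:ℕ) = 2 * 5 by norm_num, Nat.factorization_mul (by norm_num) (by norm_num),
      Nat.Prime.factorization (by norm_num), Nat.Prime.factorization (by norm_num)]
  have hval : ∀ p, a * k.factorization p = b * (10:ℕ).factorization p := by
    intro p
    have := DFunLike.congr_fun hfac p
    simpa [Finsupp.smul_apply, smul_eq_mul] using this
  have h102 : (10:ℕ).factorization 2 = 1 := by rw [h10]; simp [Finsupp.single_apply]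
  have h105 : (10:ℕ).factorization 5 = 1 := by rw [h10]; simp [Finsupp.single_apply]
  have f2 : a * k.factorization 2 = b := by rw [hval 2, h102, mul_one]
  have f5 : a * k.factorization 5 = b := by rw [hval 5, h105, mul_one]
  set j := k.factorization 2 with hj
  refine ⟨j, ?_⟩
  have hapos : 0 < a := Nat.pos_of_ne_zero ha
  have hj5 : k.factorization 5 = j := by
    have := f2.trans f5.symm
    exact (Nat.eq_of_mul_eq_mul_left hapos this).symm
  have hother : ∀ p, p ≠ 2 → p ≠ 5 → k.factorization p = 0 := by
    intro p hp2 hp5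
    have h0 : (10:ℕ).factorization p = 0 := by
      rw [h10]; simp [Finsupp.single_apply, hp2.symm, hp5.symm]
    have := hval p
    rw [h0, mul_zero] at this
    exact (mul_eq_zero.mp this).resolve_left ha
  apply Nat.factorization_inj (Set.mem_setOf_eq ▸ hk0) (Set.mem_setOf_eq ▸ pow_ne_zero j (by norm_num : (10:ℕ) ≠ 0))
  rw [Nat.factorization_pow]
  ext p
  rw [Finsupp.smul_apply, smul_eq_mul]
  by_cases hp2 : p = 2
  · subst hp2; rw [h102, mul_one]
  · by_cases hp5 : p = 5
    · subst hp5; rw [h105, mul_one, hj5]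
    · rw [hother p hp2 hp5]
      rw [show (10:ℕ).factorization p = 0 by rw [h10]; simp [Finsupp.single_apply, Ne.symm hp2, Ne.symm hp5], mul_zero]

lemma logb_not_int {k : ℕ} (hk : 2 ≤ k) (hk10 : ¬∃ j : ℕ, k = 10 ^ j) {ℓ : ℤ} (hℓ : ℓ ≠ 0)
    (n : ℤ) : (ℓ:ℝ) * Real.logb 10 k ≠ (n:ℝ) := by
  intro h
  have hlog10 : (0:ℝ) < Real.log 10 := Real.log_pos (by norm_num)
  have hklt : (1:ℝ) < (k:ℝ) := by exact_mod_cast lt_of_lt_of_le one_lt_two hk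
  have hlogk : (0:ℝ) < Real.log k := Real.log_pos hklt
  have hmain : (ℓ:ℝ) * Real.log k = (n:ℝ) * Real.log 10 := by
    rw [Real.logb] at h
    field_simp at h
    linarith [h]
  have habs : (ℓ.natAbs : ℝ) * Real.log k = (n.natAbs : ℝ) * Real.log 10 := by
    have := congrArg (fun x : ℝ => |x|) hmain
    rw [abs_mul, abs_mul, abs_of_pos hlogk, abs_of_pos hlog10] at this
    rw [Nat.cast_natAbs, Nat.cast_natAbs]
    push_cast
    exact this
  have hpow : Real.log ((k:ℝ) ^ ℓ.natAbs) = Real.log ((10:ℝ) ^ n.natAbs) := by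
    rw [Real.log_pow, Real.log_pow]
    exact_mod_cast habs
  have hkpos : (0:ℝ) < (k:ℝ)^ℓ.natAbs := by positivity
  have h10pos : (0:ℝ) < (10:ℝ)^n.natAbs := by positivity
  have heq : (k:ℝ)^ℓ.natAbs = (10:ℝ)^n.natAbs := by
    rw [← Real.exp_log hkpos, ← Real.exp_log h10pos, hpow]
  have heqn : k^ℓ.natAbs = 10^n.natAbs := by exact_mod_cast heq
  exact hk10 (pow_eq_pow_ten hk (Int.natAbs_ne_zero.mpr hℓ) heqn)

/-- For `k ≥ 2` not a power of `10`, nonzero integer `ℓ` and any real `α`, the sum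
`∑_{p ≤ x} (1 − Re(e^{2πiℓ log₁₀ k} p^{−iα}))/p` tends to infinity. -/
theorem sum_dist_dk_tendsto_atTop (k : ℕ) (hk : 2 ≤ k) (hk10 : ¬∃ j : ℕ, k = 10 ^ j)
    (ℓ : ℤ) (hℓ : ℓ ≠ 0) (α : ℝ) :
    Tendsto (fun x : ℝ =>
        ∑ p ∈ Finset.filter Nat.Prime (Finset.range (⌊x⌋₊ + 1)),
          (1 - (Complex.exp (2 * Real.pi * Complex.I * (ℓ : ℂ) * (Real.logb 10 k : ℂ))
              * (p : ℂ) ^ (-(Complex.I * (α : ℂ)))).re) / p)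
      atTop atTop := by
  set c₀ : ℂ := Complex.exp (2 * Real.pi * Complex.I * (ℓ : ℂ) * (Real.logb 10 k : ℂ)) with hc₀def
  have hc₀ : ‖c₀‖ = 1 := by
    rw [hc₀def, show (2 * (Real.pi:ℂ) * Complex.I * (ℓ : ℂ) * ((Real.logb 10 k : ℝ) : ℂ))
      = ((2 * Real.pi * ℓ * Real.logb 10 k : ℝ) : ℂ) * Complex.I by push_cast; ring,
      Complex.norm_exp_ofReal_mul_I]
  have hc₀ne : c₀ ≠ 1 := by
    intro hone
    rw [hc₀def, Complex.exp_eq_one_iff] at hone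
    obtain ⟨n, hn⟩ := hone
    apply logb_not_int hk hk10 hℓ n
    have h2πI : (2 * (Real.pi:ℂ) * Complex.I) ≠ 0 := by
      simp [Real.pi_ne_zero, Complex.I_ne_zero]
    have heq2 : (2 * (Real.pi:ℂ) * Complex.I) * ((ℓ:ℂ) * ((Real.logb 10 k : ℝ) : ℂ))
        = (2 * (Real.pi:ℂ) * Complex.I) * (n : ℂ) := by
      rw [show (2 * (Real.pi:ℂ) * Complex.I) * ((ℓ:ℂ) * ((Real.logb 10 k : ℝ) : ℂ))
        = 2 * (Real.pi:ℂ) * Complex.I * (ℓ : ℂ) * ((Real.logb 10 k : ℝ) : ℂ) by ring, hn]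
      ring
    have := mul_left_cancel₀ h2πI heq2
    exact_mod_cast this
  set w : ℕ → ℂ := fun n => c₀ * (n : ℂ) ^ (-(Complex.I * (α : ℂ))) with hwdef
  set f : ℕ → ℝ := fun n => if n.Prime then (1 - (w n).re)/n else 0 with hfdef
  have hwnorm : ∀ n : ℕ, n.Prime → ‖w n‖ = 1 := by
    intro n hn
    rw [hwdef]
    simp only
    rw [norm_mul, hc₀, one_mul, Complex.norm_natCast_cpow_of_pos hn.pos]
    simp
  have hwre : ∀ n : ℕ, n.Prime → (w n).re ≤ 1 ∧ (w n).re^2 + (w n).im^2 = 1 := fun n hn =>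
    ⟨by
      have := Complex.re_le_norm (w n)
      rw [hwnorm n hn] at this; exact this,
     normSq_one_of_norm_one (hwnorm n hn)⟩
  have hf0 : ∀ n, 0 ≤ f n := by
    intro n
    rw [hfdef]; simp only
    split
    case isTrue hn =>
      have h1 := (hwre n hn).1
      have : (0:ℝ) ≤ n := Nat.cast_nonneg n
      apply div_nonneg (by linarith) this
    case isFalse => exact le_refl 0
  suffices h : Tendsto (fun m : ℕ => ∑ n ∈ Finset.range m, f n) atTop atTop by
    have hcomp := h.comp ((tendsto_add_atTop_nat 1).comp (tendsto_nat_floor_atTop (α := ℝ)))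
    refine hcomp.congr fun x => ?_
    simp only [Function.comp_apply]
    rw [Finset.sum_filter]
  by_contra hns
  have hsum : Summable f := (summable_iff_not_tendsto_nat_atTop_of_nonneg hf0).mpr hns
  set C := ∑' n, f n with hCdef
  have hC0 : 0 ≤ C := tsum_nonneg hf0
  have hyp1 : ∀ σ : ℝ, 1 < σ → LL σ - 4*C ≤ (c₀ * ZZ α σ).re := by
    intro σ hσ
    apply key_ineq_s5 c₀ w f hf0 hsum α σ hσ
    · intro n hn
      have hn0 : (n:ℂ) ≠ 0 := Nat.cast_ne_zero.mpr hn.pos.ne'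
      rw [show -((σ:ℂ)+(α:ℂ)*Complex.I) = (-(Complex.I * (α:ℂ))) + (-(σ:ℂ)) by ring,
        Complex.cpow_add _ _ hn0, Complex.ofReal_cpow (Nat.cast_nonneg n)]
      push_cast
      ring
    · intro n hn
      have h1 := (hwre n hn).1
      have hmono : (n:ℝ)^(-σ) ≤ (n:ℝ)⁻¹ := by
        rw [← Real.rpow_neg_one (n:ℝ)]
        exact Real.rpow_le_rpow_of_exponent_le (by exact_mod_cast hn.one_lt.le) (by linarith)
      have hfn : f n = (1 - (w n).re)/n := by rw [hfdef]; simp [hn]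
      have hnn : (0:ℝ) < n := by exact_mod_cast hn.pos
      rw [hfn]
      calc (1 - (w n).re) * (n:ℝ)^(-σ) ≤ (1 - (w n).re) * (n:ℝ)⁻¹ :=
            mul_le_mul_of_nonneg_left hmono (by linarith)
        _ = (1 - (w n).re)/n := by rw [div_eq_mul_inv]
        _ ≤ 4 * ((1 - (w n).re)/n) := by
            have : 0 ≤ (1 - (w n).re)/n := div_nonneg (by linarith) hnn.le
            linarith
  have hyp2 : ∀ σ : ℝ, 1 < σ → LL σ - 4*C ≤ (c₀^2 * ZZ (2*α) σ).re := by
    intro σ hσ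
    apply key_ineq_s5 (c₀^2) (fun n => (w n)^2) f hf0 hsum (2*α) σ hσ
    · intro n hn
      have hn0 : (n:ℂ) ≠ 0 := Nat.cast_ne_zero.mpr hn.pos.ne'
      rw [show -((σ:ℂ)+((2*α : ℝ):ℂ)*Complex.I)
          = (-(Complex.I * (α:ℂ))) + ((-(Complex.I * (α:ℂ))) + (-(σ:ℂ))) by push_cast; ring,
        Complex.cpow_add _ _ hn0, Complex.cpow_add _ _ hn0,
        Complex.ofReal_cpow (Nat.cast_nonneg n)]
      push_cast
      ring
    · intro n hn
      obtain ⟨h1, h2⟩ := hwre n hn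
      have hsqre : ((w n)^2).re = (w n).re^2 - (w n).im^2 := by
        rw [sq, Complex.mul_re]; ring
      have hkey : 1 - ((w n)^2).re ≤ 4 * (1 - (w n).re) := by nlinarith [h2, h1, hsqre]
      have h2' : (0:ℝ) ≤ 1 - ((w n)^2).re := by nlinarith [h2, h1, hsqre]
      have hmono : (n:ℝ)^(-σ) ≤ (n:ℝ)⁻¹ := by
        rw [← Real.rpow_neg_one (n:ℝ)]
        exact Real.rpow_le_rpow_of_exponent_le (by exact_mod_cast hn.one_lt.le) (by linarith)
      have hfn : f n = (1 - (w n).re)/n := by rw [hfdef]; simp [hn]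
      have hnn : (0:ℝ) < n := by exact_mod_cast hn.pos
      rw [hfn]
      calc (1 - ((w n)^2).re) * (n:ℝ)^(-σ) ≤ (1 - ((w n)^2).re) * (n:ℝ)⁻¹ :=
            mul_le_mul_of_nonneg_left hmono h2'
        _ ≤ (4*(1 - (w n).re)) * (n:ℝ)⁻¹ := by
            apply mul_le_mul_of_nonneg_right hkey (by positivity)
        _ = 4 * ((1 - (w n).re)/n) := by rw [div_eq_mul_inv]; ring
  rcases eq_or_ne α 0 with rfl | hα
  · have h := core_t0 hc₀ (by linarith : (0:ℝ) ≤ 4*C) hyp1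
    have hsq := normSq_one_of_norm_one hc₀
    have him2 : c₀.im^2 = 0 := by nlinarith [hsq, h]
    have him : c₀.im = 0 := by
      exact (pow_eq_zero_iff two_ne_zero).mp him2
    exact hc₀ne (Complex.ext (by rw [h]; rfl) (by rw [him]; rfl))
  · have hα2 : 2*α ≠ 0 := mul_ne_zero two_ne_zero hα
    have h1 := core_tne hc₀ hα (by linarith : (0:ℝ) ≤ 4*C) hyp1
    have h2 := core_tne (by rw [norm_pow, hc₀, one_pow]) hα2 (by linarith : (0:ℝ) ≤ 4*C) hyp2
    have hsq := normSq_one_of_norm_one hc₀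
    have hsqre : (c₀^2).re = c₀.re^2 - c₀.im^2 := by rw [sq, Complex.mul_re]; ring
    nlinarith [h1, h2, hsq, hsqre]
end

section
/- Let f be a multiplicative function with |f(n)| ≤ 1 for all n, and suppose there exist distinct real numbers α, α' with D(f, n^{iα}; ∞) < ∞ and D(f, n^{iα'}; ∞) < ∞. Then α = α'. (Uniqueness of the pretentious target n^{iα}.) -/
open Complex Filter Topology

/-! ### Auxiliary lemmas -/

lemma aux_tri (u z w : ℂ) (hu : ‖u‖ ≤ 1) (hz : ‖z‖ = 1) (hw : ‖w‖ = 1) :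
    1 - (z * (starRingEnd ℂ) w).re ≤
      2 * (1 - (u * (starRingEnd ℂ) z).re) + 2 * (1 - (u * (starRingEnd ℂ) w).re) := by
  have hu' : u.re^2 + u.im^2 ≤ 1 := by
    nlinarith [Complex.normSq_apply u, Complex.sq_norm u, norm_nonneg u,
      (show ‖u‖ ≤ 1 from hu)]
  have hz' : z.re^2 + z.im^2 = 1 := by
    nlinarith [Complex.normSq_apply z, Complex.sq_norm z, (show ‖z‖ = 1 from hz)]
  have hw' : w.re^2 + w.im^2 = 1 := by
    nlinarith [Complex.normSq_apply w, Complex.sq_norm w, (show ‖w‖ = 1 from hw)]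
  simp only [mul_re, conj_re, conj_im]
  nlinarith [sq_nonneg (z.re - 2*u.re + w.re), sq_nonneg (z.im - 2*u.im + w.im)]

lemma cpow_eq_exp (x : ℝ) (hx : 0 < x) (y : ℂ) :
    (x:ℂ) ^ y = Complex.exp ((Real.log x : ℂ) * y) := by
  rw [Complex.cpow_def_of_ne_zero (by exact_mod_cast hx.ne'), Complex.ofReal_log hx.le]

lemma norm_cpow_I (x : ℝ) (hx : 0 < x) (a : ℝ) : ‖(x:ℂ) ^ (I * (a:ℂ))‖ = 1 := by
  rw [cpow_eq_exp x hx, Complex.norm_exp]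
  have : ((Real.log x : ℂ) * (I * a)).re = 0 := by simp
  rw [this, Real.exp_zero]

lemma re_cpow_prod (x : ℝ) (hx : 0 < x) (a b : ℝ) :
    ((x:ℂ) ^ (I * (a:ℂ)) * (starRingEnd ℂ) ((x:ℂ) ^ (I * (b:ℂ)))).re
      = Real.cos ((a - b) * Real.log x) := by
  rw [cpow_eq_exp x hx, cpow_eq_exp x hx, ← Complex.exp_conj, ← Complex.exp_add]
  rw [Complex.exp_re]
  have h1 : ((Real.log x : ℂ) * (I * a) + (starRingEnd ℂ) ((Real.log x : ℂ) * (I * b))).re = 0 := by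
    simp
  have h2 : ((Real.log x : ℂ) * (I * a) + (starRingEnd ℂ) ((Real.log x : ℂ) * (I * b))).im
      = (a - b) * Real.log x := by
    simp; ring
  rw [h1, h2, Real.exp_zero, one_mul]

lemma re_cpow_neg (x : ℝ) (hx : 0 < x) (σ β : ℝ) :
    (((x:ℂ)) ^ (-((σ:ℂ) + (β:ℂ) * I))).re = x^(-σ) * Real.cos (β * Real.log x) := by
  rw [cpow_eq_exp x hx, Complex.exp_re]
  have h1 : ((Real.log x : ℂ) * -((σ:ℂ) + (β:ℂ) * I)).re = -σ * Real.log x := by simp; ring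
  have h2 : ((Real.log x : ℂ) * -((σ:ℂ) + (β:ℂ) * I)).im = -(β * Real.log x) := by simp; ring
  rw [h1, h2, Real.cos_neg, Real.rpow_def_of_pos hx]
  ring_nf

lemma re_cpow_neg_real (x : ℝ) (hx : 0 < x) (σ : ℝ) :
    (((x:ℂ)) ^ (-(σ:ℂ))).re = x^(-σ) := by
  have h := re_cpow_neg x hx σ 0
  simpa using h

/-! ### Summability over primes -/

lemma summable_primes_cpow {z : ℂ} (hz : 1 < z.re) :
    Summable (fun p : Nat.Primes => ((p:ℕ):ℂ) ^ (-z)) := by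
  have h : Summable (fun n : ℕ => 1 / (n:ℂ) ^ z) := Complex.summable_one_div_nat_cpow.mpr hz
  have h2 : Summable (fun n : ℕ => (n:ℂ) ^ (-z)) := by
    simpa only [cpow_neg, one_div] using h
  exact h2.comp_injective Nat.Primes.coe_nat_injective

lemma summable_primes_invsq : Summable (fun p : Nat.Primes => (((p:ℕ):ℝ)⁻¹)^2) := by
  have h : Summable (fun n : ℕ => ((n:ℝ)⁻¹)^2) := by
    simpa only [one_div, inv_pow] using (Real.summable_one_div_nat_pow.mpr one_lt_two)
  exact h.comp_injective Nat.Primes.coe_nat_injective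

lemma norm_prime_cpow {z : ℂ} (hz : 1 < z.re) (p : Nat.Primes) :
    ‖((p:ℕ):ℂ) ^ (-z)‖ ≤ ((p:ℕ):ℝ)⁻¹ := by
  have hp : (0:ℝ) < ((p:ℕ):ℝ) := by exact_mod_cast p.prop.pos
  have h1 : ‖((p:ℕ):ℂ) ^ (-z)‖ = ((p:ℕ):ℝ) ^ (-z).re := by
    rw [show ((p:ℕ):ℂ) = ((((p:ℕ):ℝ)):ℂ) by push_cast; rfl,
      Complex.norm_cpow_eq_rpow_re_of_pos hp]
  rw [h1, ← Real.rpow_neg_one ((p:ℕ):ℝ)]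
  apply Real.rpow_le_rpow_of_exponent_le (by exact_mod_cast p.prop.one_lt.le)
  simp only [neg_re, neg_le_neg_iff]; linarith

lemma norm_rem_le {z : ℂ} (hz : 1 < z.re) (p : Nat.Primes) :
    ‖(-(Complex.log (1 - ((p:ℕ):ℂ) ^ (-z)))) - ((p:ℕ):ℂ) ^ (-z)‖ ≤ (((p:ℕ):ℝ)⁻¹)^2 := by
  set w := ((p:ℕ):ℂ) ^ (-z) with hw
  have hp2 : (2:ℝ) ≤ ((p:ℕ):ℝ) := by exact_mod_cast p.prop.two_le
  have hinv : ((p:ℕ):ℝ)⁻¹ ≤ 1/2 := by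
    rw [inv_le_comm₀ (by linarith) (by norm_num)]; linarith
  have hwle : ‖w‖ ≤ 1/2 := le_trans (norm_prime_cpow hz p) hinv
  have hwlt : ‖w‖ < 1 := lt_of_le_of_lt hwle (by norm_num)
  have hlog : -(Complex.log (1 - w)) = Complex.log (1 - w)⁻¹ := by
    rw [Complex.log_inv _ (Complex.slitPlane_arg_ne_pi ?_)]
    rw [sub_eq_add_neg]
    exact Complex.mem_slitPlane_of_norm_lt_one ((norm_neg w).symm ▸ hwlt)
  rw [hlog]
  calc ‖Complex.log (1 - w)⁻¹ - w‖ ≤ ‖w‖^2 * (1 - ‖w‖)⁻¹ / 2 :=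
        Complex.norm_log_one_sub_inv_sub_self_le hwlt
    _ ≤ ‖w‖^2 * 2 / 2 := by
        have h2 : (1 - ‖w‖)⁻¹ ≤ 2 := by
          rw [inv_le_comm₀ (by linarith) (by norm_num)]; linarith
        gcongr
    _ = ‖w‖^2 := by ring
    _ ≤ (((p:ℕ):ℝ)⁻¹)^2 := by
        gcongr
        exact norm_prime_cpow hz p

lemma log_abs_zeta_eq {z : ℂ} (hz : 1 < z.re) :
    Real.log (‖riemannZeta z‖)
      = ∑' p : Nat.Primes, (-(Complex.log (1 - ((p:ℕ):ℂ) ^ (-z)))).re := by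
  have h := riemannZeta_eulerProduct_exp_log hz
  have habs : ‖riemannZeta z‖
      = Real.exp ((∑' p : Nat.Primes, -(Complex.log (1 - ((p:ℕ):ℂ) ^ (-z)))).re) := by
    rw [← h, Complex.norm_exp]
  rw [habs, Real.log_exp, Complex.re_tsum]
  exact ((summable_primes_cpow hz).clog_one_sub).neg

/-! ### The key Euler-product bound -/

lemma key_bound (β : ℝ) {σ : ℝ} (hσ : 1 < σ) :
    Real.log (‖riemannZeta (σ:ℂ)‖)
        - Real.log (‖riemannZeta ((σ:ℂ) + (β:ℂ)*I)‖)
      ≤ (∑' p : Nat.Primes, ((p:ℕ):ℝ)^(-σ) * (1 - Real.cos (β * Real.log ((p:ℕ):ℝ))))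
        + 2 * ∑' p : Nat.Primes, (((p:ℕ):ℝ)⁻¹)^2 := by
  set s : ℂ := (σ:ℂ) + (β:ℂ)*I with hs_def
  have hσ' : 1 < ((σ:ℂ)).re := by simpa using hσ
  have hs : 1 < s.re := by simp [hs_def, hσ]
  have Scσ := summable_primes_cpow hσ'
  have Scs := summable_primes_cpow hs
  have Slogσ : Summable (fun p : Nat.Primes => -(Complex.log (1 - ((p:ℕ):ℂ) ^ (-(σ:ℂ))))) :=
    Scσ.clog_one_sub.neg
  have Slogs : Summable (fun p : Nat.Primes => -(Complex.log (1 - ((p:ℕ):ℂ) ^ (-s)))) :=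
    Scs.clog_one_sub.neg
  have Sgσ : Summable (fun p : Nat.Primes => (-(Complex.log (1 - ((p:ℕ):ℂ) ^ (-(σ:ℂ))))).re) :=
    (Complex.hasSum_re Slogσ.hasSum).summable
  have Sgs : Summable (fun p : Nat.Primes => (-(Complex.log (1 - ((p:ℕ):ℂ) ^ (-s)))).re) :=
    (Complex.hasSum_re Slogs.hasSum).summable
  have Sreσ : Summable (fun p : Nat.Primes => (((p:ℕ):ℂ) ^ (-(σ:ℂ))).re) :=
    (Complex.hasSum_re Scσ.hasSum).summable
  have Sres : Summable (fun p : Nat.Primes => (((p:ℕ):ℂ) ^ (-s)).re) :=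
    (Complex.hasSum_re Scs.hasSum).summable
  have Srσ : Summable (fun p : Nat.Primes =>
      ((-(Complex.log (1 - ((p:ℕ):ℂ) ^ (-(σ:ℂ))))) - ((p:ℕ):ℂ) ^ (-(σ:ℂ))).re) :=
    (Complex.hasSum_re (Slogσ.sub Scσ).hasSum).summable
  have Srs : Summable (fun p : Nat.Primes =>
      ((-(Complex.log (1 - ((p:ℕ):ℂ) ^ (-s)))) - ((p:ℕ):ℂ) ^ (-s)).re) :=
    (Complex.hasSum_re (Slogs.sub Scs).hasSum).summable
  rw [log_abs_zeta_eq hσ', log_abs_zeta_eq hs, ← Summable.tsum_sub Sgσ Sgs]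
  have hdecomp : ∀ p : Nat.Primes,
      (-(Complex.log (1 - ((p:ℕ):ℂ) ^ (-(σ:ℂ))))).re - (-(Complex.log (1 - ((p:ℕ):ℂ) ^ (-s)))).re
      = ((((p:ℕ):ℂ) ^ (-(σ:ℂ))).re - (((p:ℕ):ℂ) ^ (-s)).re)
        + (((-(Complex.log (1 - ((p:ℕ):ℂ) ^ (-(σ:ℂ))))) - ((p:ℕ):ℂ) ^ (-(σ:ℂ))).re
           - ((-(Complex.log (1 - ((p:ℕ):ℂ) ^ (-s)))) - ((p:ℕ):ℂ) ^ (-s)).re) := by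
    intro p; simp [Complex.sub_re]; ring
  calc (∑' p : Nat.Primes,
        ((-(Complex.log (1 - ((p:ℕ):ℂ) ^ (-(σ:ℂ))))).re
          - (-(Complex.log (1 - ((p:ℕ):ℂ) ^ (-s)))).re))
      = (∑' p : Nat.Primes, ((((p:ℕ):ℂ) ^ (-(σ:ℂ))).re - (((p:ℕ):ℂ) ^ (-s)).re))
        + ∑' p : Nat.Primes,
          (((-(Complex.log (1 - ((p:ℕ):ℂ) ^ (-(σ:ℂ))))) - ((p:ℕ):ℂ) ^ (-(σ:ℂ))).re
           - ((-(Complex.log (1 - ((p:ℕ):ℂ) ^ (-s)))) - ((p:ℕ):ℂ) ^ (-s)).re) := by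
        rw [← Summable.tsum_add (Sreσ.sub Sres) (Srσ.sub Srs)]
        exact tsum_congr hdecomp
    _ ≤ (∑' p : Nat.Primes, ((p:ℕ):ℝ)^(-σ) * (1 - Real.cos (β * Real.log ((p:ℕ):ℝ))))
        + 2 * ∑' p : Nat.Primes, (((p:ℕ):ℝ)⁻¹)^2 := by
        apply add_le_add
        · apply le_of_eq
          apply tsum_congr
          intro p
          have hp : (0:ℝ) < ((p:ℕ):ℝ) := by exact_mod_cast p.prop.pos
          have h1 : (((p:ℕ):ℂ) ^ (-(σ:ℂ))).re = ((p:ℕ):ℝ)^(-σ) := by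
            rw [show ((p:ℕ):ℂ) = ((((p:ℕ):ℝ)):ℂ) by push_cast; rfl]
            exact re_cpow_neg_real _ hp σ
          have h2 : (((p:ℕ):ℂ) ^ (-s)).re
              = ((p:ℕ):ℝ)^(-σ) * Real.cos (β * Real.log ((p:ℕ):ℝ)) := by
            rw [show ((p:ℕ):ℂ) = ((((p:ℕ):ℝ)):ℂ) by push_cast; rfl]
            exact re_cpow_neg _ hp σ β
          rw [h1, h2]; ring
        · rw [← tsum_mul_left]
          apply Summable.tsum_le_tsum _ (Srσ.sub Srs) (summable_primes_invsq.mul_left 2)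
          intro p
          have b1 := norm_rem_le hσ' p
          have b2 := norm_rem_le hs p
          have e1 : |((-(Complex.log (1 - ((p:ℕ):ℂ) ^ (-(σ:ℂ))))) - ((p:ℕ):ℂ) ^ (-(σ:ℂ))).re|
              ≤ (((p:ℕ):ℝ)⁻¹)^2 := le_trans (Complex.abs_re_le_norm _) b1
          have e2 : |((-(Complex.log (1 - ((p:ℕ):ℂ) ^ (-s)))) - ((p:ℕ):ℂ) ^ (-s)).re|
              ≤ (((p:ℕ):ℝ)⁻¹)^2 := le_trans (Complex.abs_re_le_norm _) b2
          cases abs_le.mp e1 with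
          | intro l1 r1 =>
            cases abs_le.mp e2 with
            | intro l2 r2 => linarith

/-! ### Behaviour of ζ near the line Re = 1 -/

lemma continuousAt_finset_sum_aux {ι : Type*} (s : Finset ι) (f : ι → ℝ → ℝ) (x : ℝ)
    (h : ∀ i ∈ s, ContinuousAt (f i) x) :
    ContinuousAt (fun y => ∑ i ∈ s, f i y) x := by
  have := tendsto_finset_sum s (fun i hi => (h i hi))
  exact this

lemma re_zeta_lower {σ : ℝ} (hσ : 1 < σ) (N : ℕ) :
    ∑ n ∈ Finset.range N, (((n:ℝ)+1)^σ)⁻¹ ≤ ‖riemannZeta (σ:ℂ)‖ := by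
  have hσ' : 1 < ((σ:ℂ)).re := by simpa using hσ
  have hz := zeta_eq_tsum_one_div_nat_add_one_cpow hσ'
  have hsum : Summable (fun n : ℕ => 1 / ((n:ℂ)+1) ^ (σ:ℂ)) := by
    have h : Summable (fun n : ℕ => 1 / (n:ℂ) ^ (σ:ℂ)) :=
      Complex.summable_one_div_nat_cpow.mpr hσ'
    have h2 := h.comp_injective Nat.succ_injective
    apply h2.congr
    intro n
    simp only [Function.comp, Nat.succ_eq_add_one]
    push_cast
    ring
  have hterm : ∀ n : ℕ, (1 / ((n:ℂ)+1) ^ (σ:ℂ)).re = (((n:ℝ)+1)^σ)⁻¹ := by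
    intro n
    have h0 : (0:ℝ) ≤ (n:ℝ)+1 := by positivity
    have : ((n:ℂ)+1) ^ (σ:ℂ) = (((((n:ℝ)+1)^σ : ℝ)):ℂ) := by
      rw [Complex.ofReal_cpow h0]; push_cast; ring_nf
    rw [this, ← Complex.ofReal_one, ← Complex.ofReal_div, Complex.ofReal_re, one_div]
  have hre : (riemannZeta (σ:ℂ)).re = ∑' n : ℕ, (((n:ℝ)+1)^σ)⁻¹ := by
    rw [hz, Complex.re_tsum hsum]
    exact tsum_congr hterm
  have hresum : Summable (fun n : ℕ => (((n:ℝ)+1)^σ)⁻¹) := by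
    exact ((Complex.hasSum_re hsum.hasSum).summable).congr hterm
  calc ∑ n ∈ Finset.range N, (((n:ℝ)+1)^σ)⁻¹
      ≤ ∑' n : ℕ, (((n:ℝ)+1)^σ)⁻¹ := by
        apply Summable.sum_le_tsum _ (fun n _ => by positivity) hresum
    _ = (riemannZeta (σ:ℂ)).re := hre.symm
    _ ≤ ‖riemannZeta (σ:ℂ)‖ := Complex.re_le_norm _

lemma zeta_blowup (M : ℝ) :
    ∀ᶠ σ : ℝ in 𝓝[>](1:ℝ), M < ‖riemannZeta (σ:ℂ)‖ := by
  obtain ⟨N, hN⟩ : ∃ N : ℕ, M + 1 < ∑ n ∈ Finset.range N, ((n:ℝ)+1)⁻¹ := by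
    have h := Real.tendsto_sum_range_one_div_nat_succ_atTop
    have := (h.eventually_gt_atTop (M+1)).exists
    obtain ⟨N, hN⟩ := this
    exact ⟨N, by simpa [one_div] using hN⟩
  have hcont : ContinuousAt (fun σ : ℝ => ∑ n ∈ Finset.range N, (((n:ℝ)+1)^σ)⁻¹) 1 := by
    apply continuousAt_finset_sum_aux
    intro n _
    have hb : ((n:ℝ)+1) ≠ 0 := by positivity
    exact (Real.continuousAt_const_rpow hb).inv₀ (by positivity)
  have hev : ∀ᶠ σ : ℝ in 𝓝[>](1:ℝ), M < ∑ n ∈ Finset.range N, (((n:ℝ)+1)^σ)⁻¹ := by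
    have := hcont.tendsto
    simp only [Real.rpow_one] at this
    have h2 : ∀ᶠ σ in 𝓝 (1:ℝ), M < ∑ n ∈ Finset.range N, (((n:ℝ)+1)^σ)⁻¹ :=
      this.eventually_const_lt (by linarith)
    exact h2.filter_mono nhdsWithin_le_nhds
  filter_upwards [hev, self_mem_nhdsWithin] with σ h1 h2
  exact lt_of_lt_of_le h1 (re_zeta_lower h2 N)

lemma zeta_bounded_off (β : ℝ) (hβ : β ≠ 0) :
    ∀ᶠ σ : ℝ in 𝓝[>](1:ℝ),
      ‖riemannZeta ((σ:ℂ) + (β:ℂ)*I)‖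
        < ‖riemannZeta (1 + (β:ℂ)*I)‖ + 1 := by
  have hne : (1 : ℂ) + (β:ℂ)*I ≠ 1 := by
    intro h
    have : ((β:ℂ)*I).im = 0 := by
      have := congrArg Complex.im h
      simpa using this
    simp [Complex.mul_im] at this
    exact hβ this
  have hcont : ContinuousAt riemannZeta (1 + (β:ℂ)*I) :=
    (differentiableAt_riemannZeta hne).continuousAt
  have hmap : Tendsto (fun σ : ℝ => (σ:ℂ) + (β:ℂ)*I) (𝓝[>](1:ℝ)) (𝓝 (1 + (β:ℂ)*I)) := by
    apply Tendsto.mono_left _ nhdsWithin_le_nhds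
    have : ContinuousAt (fun σ : ℝ => (σ:ℂ) + (β:ℂ)*I) 1 := by fun_prop
    simpa using this.tendsto
  have hcomp := (hcont.tendsto.comp hmap)
  have habs : Tendsto (fun σ : ℝ => ‖riemannZeta ((σ:ℂ) + (β:ℂ)*I)‖) (𝓝[>](1:ℝ))
      (𝓝 (‖riemannZeta (1 + (β:ℂ)*I)‖)) :=
    (continuous_norm.continuousAt.tendsto.comp hcomp)
  exact habs.eventually_lt_const (by linarith)

/-! ### Main theorem -/

/-- Uniqueness of the pretentious target: a unit-disc-valued multiplicative function can
pretend to be `n^{iα}` for at most one real `α`. -/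
theorem pretentious_target_unique (f : ℕ → ℂ)
    (hmult : ∀ m n : ℕ, Nat.Coprime m n → f (m * n) = f m * f n)
    (hb : ∀ n, ‖f n‖ ≤ 1) (α α' : ℝ)
    (h1 : Summable (fun p : Nat.Primes =>
      (1 - (f p * (starRingEnd ℂ) (((p : ℕ) : ℂ) ^ (Complex.I * (α : ℂ)))).re) / ((p : ℕ) : ℝ)))
    (h2 : Summable (fun p : Nat.Primes =>
      (1 - (f p * (starRingEnd ℂ) (((p : ℕ) : ℂ) ^ (Complex.I * (α' : ℂ)))).re) / ((p : ℕ) : ℝ))) :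
    α = α' := by
  by_contra hne
  set β : ℝ := α - α' with hβdef
  have hβ : β ≠ 0 := sub_ne_zero.mpr hne
  -- the pretentious distance comparison
  have hptC : ∀ p : Nat.Primes,
      (1 - Real.cos (β * Real.log ((p:ℕ):ℝ))) / ((p:ℕ):ℝ)
        ≤ 2 * ((1 - (f p * (starRingEnd ℂ) (((p:ℕ):ℂ) ^ (Complex.I * (α:ℂ)))).re) / ((p:ℕ):ℝ))
          + 2 * ((1 - (f p * (starRingEnd ℂ)
              (((p:ℕ):ℂ) ^ (Complex.I * (α':ℂ)))).re) / ((p:ℕ):ℝ)) := by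
    intro p
    have hp : (0:ℝ) < ((p:ℕ):ℝ) := by exact_mod_cast p.prop.pos
    have hcast : ((p:ℕ):ℂ) = ((((p:ℕ):ℝ)):ℂ) := by push_cast; rfl
    have hz1 : ‖((p:ℕ):ℂ) ^ (Complex.I * (α:ℂ))‖ = 1 := by
      rw [hcast]; exact norm_cpow_I _ hp α
    have hw1 : ‖((p:ℕ):ℂ) ^ (Complex.I * (α':ℂ))‖ = 1 := by
      rw [hcast]; exact norm_cpow_I _ hp α'
    have hrezw : ((((p:ℕ):ℂ) ^ (Complex.I * (α:ℂ))) * (starRingEnd ℂ)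
        (((p:ℕ):ℂ) ^ (Complex.I * (α':ℂ)))).re = Real.cos (β * Real.log ((p:ℕ):ℝ)) := by
      rw [hcast, re_cpow_prod _ hp α α']
    have tri := aux_tri (f p) (((p:ℕ):ℂ) ^ (Complex.I * (α:ℂ)))
      (((p:ℕ):ℂ) ^ (Complex.I * (α':ℂ))) (hb _) hz1 hw1
    rw [hrezw] at tri
    have := mul_le_mul_of_nonneg_right tri (inv_nonneg.mpr hp.le)
    calc (1 - Real.cos (β * Real.log ((p:ℕ):ℝ))) / ((p:ℕ):ℝ)
        = (1 - Real.cos (β * Real.log ((p:ℕ):ℝ))) * ((p:ℕ):ℝ)⁻¹ := by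
          rw [div_eq_mul_inv]
      _ ≤ (2 * (1 - (f p * (starRingEnd ℂ) (((p:ℕ):ℂ) ^ (Complex.I * (α:ℂ)))).re)
            + 2 * (1 - (f p * (starRingEnd ℂ)
                (((p:ℕ):ℂ) ^ (Complex.I * (α':ℂ)))).re)) * ((p:ℕ):ℝ)⁻¹ := this
      _ = 2 * ((1 - (f p * (starRingEnd ℂ) (((p:ℕ):ℂ) ^ (Complex.I * (α:ℂ)))).re) / ((p:ℕ):ℝ))
          + 2 * ((1 - (f p * (starRingEnd ℂ)
              (((p:ℕ):ℂ) ^ (Complex.I * (α':ℂ)))).re) / ((p:ℕ):ℝ)) := by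
          ring
  have hCnonneg : ∀ p : Nat.Primes,
      0 ≤ (1 - Real.cos (β * Real.log ((p:ℕ):ℝ))) / ((p:ℕ):ℝ) := by
    intro p
    have hp : (0:ℝ) < ((p:ℕ):ℝ) := by exact_mod_cast p.prop.pos
    have hc := Real.cos_le_one (β * Real.log ((p:ℕ):ℝ))
    apply div_nonneg (by linarith) hp.le
  have hC : Summable (fun p : Nat.Primes =>
      (1 - Real.cos (β * Real.log ((p:ℕ):ℝ))) / ((p:ℕ):ℝ)) :=
    Summable.of_nonneg_of_le hCnonneg hptC ((h1.mul_left 2).add (h2.mul_left 2))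
  -- constants
  set C : ℝ := ∑' p : Nat.Primes, (1 - Real.cos (β * Real.log ((p:ℕ):ℝ))) / ((p:ℕ):ℝ) with hCdef
  set E : ℝ := ∑' p : Nat.Primes, (((p:ℕ):ℝ)⁻¹)^2 with hEdef
  set B : ℝ := ‖riemannZeta (1 + (β:ℂ)*I)‖ + 1 with hBdef
  have hBpos : 0 < B := by positivity
  set M : ℝ := Real.exp (C + 2*E + Real.log B) with hMdef
  -- pick a good σ
  obtain ⟨σ, ⟨hMσ, hBσ⟩, hσ1⟩ :=
    (((zeta_blowup M).and (zeta_bounded_off β hβ)).and self_mem_nhdsWithin).exists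
  have hσ : (1:ℝ) < σ := hσ1
  -- the truncated sum is bounded by C
  have hAsummand_le : ∀ p : Nat.Primes,
      ((p:ℕ):ℝ)^(-σ) * (1 - Real.cos (β * Real.log ((p:ℕ):ℝ)))
        ≤ (1 - Real.cos (β * Real.log ((p:ℕ):ℝ))) / ((p:ℕ):ℝ) := by
    intro p
    have hp1 : (1:ℝ) ≤ ((p:ℕ):ℝ) := by exact_mod_cast p.prop.one_lt.le
    have hp : (0:ℝ) < ((p:ℕ):ℝ) := by linarith
    have hcos : 0 ≤ 1 - Real.cos (β * Real.log ((p:ℕ):ℝ)) := by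
      have := Real.cos_le_one (β * Real.log ((p:ℕ):ℝ)); linarith
    have hrp : ((p:ℕ):ℝ)^(-σ) ≤ ((p:ℕ):ℝ)⁻¹ := by
      rw [← Real.rpow_neg_one ((p:ℕ):ℝ)]
      exact Real.rpow_le_rpow_of_exponent_le hp1 (by linarith)
    calc ((p:ℕ):ℝ)^(-σ) * (1 - Real.cos (β * Real.log ((p:ℕ):ℝ)))
        ≤ ((p:ℕ):ℝ)⁻¹ * (1 - Real.cos (β * Real.log ((p:ℕ):ℝ))) :=
          mul_le_mul_of_nonneg_right hrp hcos
      _ = (1 - Real.cos (β * Real.log ((p:ℕ):ℝ))) / ((p:ℕ):ℝ) := by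
          rw [div_eq_mul_inv]; ring
  have hAsummable : Summable (fun p : Nat.Primes =>
      ((p:ℕ):ℝ)^(-σ) * (1 - Real.cos (β * Real.log ((p:ℕ):ℝ)))) := by
    apply Summable.of_nonneg_of_le _ hAsummand_le hC
    intro p
    have hp : (0:ℝ) < ((p:ℕ):ℝ) := by exact_mod_cast p.prop.pos
    have := Real.cos_le_one (β * Real.log ((p:ℕ):ℝ))
    have h0 : (0:ℝ) ≤ ((p:ℕ):ℝ)^(-σ) := Real.rpow_nonneg hp.le _
    nlinarith
  have hA_le_C : (∑' p : Nat.Primes,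
      ((p:ℕ):ℝ)^(-σ) * (1 - Real.cos (β * Real.log ((p:ℕ):ℝ)))) ≤ C :=
    Summable.tsum_le_tsum hAsummand_le hAsummable hC
  -- bounds on the zeta factors
  have hζσne : riemannZeta ((σ:ℂ) + (β:ℂ)*I) ≠ 0 := by
    apply riemannZeta_ne_zero_of_one_lt_re
    simp [hσ]
  have hζσpos : 0 < ‖riemannZeta ((σ:ℂ) + (β:ℂ)*I)‖ :=
    norm_pos_iff.mpr hζσne
  have hlog2 : Real.log (‖riemannZeta ((σ:ℂ) + (β:ℂ)*I)‖) ≤ Real.log B :=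
    Real.log_le_log hζσpos hBσ.le
  have hlog1 : C + 2*E + Real.log B < Real.log (‖riemannZeta (σ:ℂ)‖) := by
    have hMpos : 0 < M := Real.exp_pos _
    have := Real.log_lt_log hMpos hMσ
    rwa [hMdef, Real.log_exp] at this
  have hkey := key_bound β hσ
  rw [← hEdef] at hkey
  linarith
end
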